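/- Let (X, τ) be a collectionwise normal submetrizable topological space and let 𝓕 be a locally finite collection of closed subsets of (X, τ) such that for every subfamily 𝓕′ ⊆ 𝓕 the union ⋃𝓕′ is a Gδ set in (X, τ). Then there exists a topology σ ⊆ τ on X such that (X, σ) is metrizable and 𝓕 is a locally finite collection of closed subsets of (X, σ). -/

import Mathlib

open Set Topology

/-- A family of sets is locally finite (w.r.t. an explicit topology `t`) if every point has a
neighborhood meeting only finitely many members of the family. -/
def LocallyFiniteFamily {X : Type*} (t : TopologicalSpace X) (F : Set (Set X)) : Prop :=
  ∀ x : X, ∃ U ∈ @nhds X t x, {C ∈ F | (C ∩ U).Nonempty}.Finite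

/-- A family of subsets indexed by `ι` is discrete (w.r.t. an explicit topology `t`) if every
point has a neighborhood meeting at most one member of the family. -/
def DiscreteFamily {X : Type*} {ι : Type*} (t : TopologicalSpace X) (F : ι → Set X) : Prop :=
  ∀ x : X, ∃ U ∈ @nhds X t x, {i | (F i ∩ U).Nonempty}.Subsingleton

/-- A T1 space is collectionwise normal if every discrete family of pairwise disjoint closed
sets can be separated by a discrete family of pairwise disjoint open sets. -/
def CollectionwiseNormal (X : Type u) [t : TopologicalSpace X] : Prop :=
  T1Space X ∧ ∀ (ι : Type u) (F : ι → Set X),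
    (∀ i, IsClosed (F i)) → Pairwise (Function.onFun Disjoint F) → DiscreteFamily t F →
      ∃ W : ι → Set X, (∀ i, IsOpen (W i)) ∧ Pairwise (Function.onFun Disjoint W) ∧
        DiscreteFamily t W ∧ ∀ i, F i ⊆ W i

/-- A topology `t` is submetrizable if there is a coarser metrizable topology. -/
def Submetrizable {X : Type*} (t : TopologicalSpace X) : Prop :=
  ∃ s : TopologicalSpace X, (∀ U, s.IsOpen U → t.IsOpen U) ∧
    @TopologicalSpace.MetrizableSpace X s

universe v

theorem cwn_normal {X : Type u} [t : TopologicalSpace X] (hcwn : CollectionwiseNormal X) :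
    NormalSpace X := by
  constructor
  intro s₁ s₂ hc₁ hc₂ hd
  rcases isEmpty_or_nonempty X with hX | hX
  · exact ⟨∅, ∅, isOpen_empty, isOpen_empty, by simp [eq_empty_of_isEmpty s₁],
      by simp [eq_empty_of_isEmpty s₂], by simp⟩
  obtain ⟨W, hWo, hWd, _, hWsub⟩ := hcwn.2 (ULift Bool)
      (fun b => if b.down then s₁ else s₂)
      (by intro i; by_cases h : i.down <;> simp [h, hc₁, hc₂])
      (by
        intro i j hij
        have hne : i.down ≠ j.down := fun h => hij (by cases i; cases j; simpa using h)
        by_cases h : i.down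
        · have h' : j.down = false := by simpa [h] using hne.symm
          simpa [Function.onFun, h, h'] using hd
        · have h'' : i.down = false := by simpa using h
          have h' : j.down = true := by
            cases hj : j.down
            · exact absurd (by rw [h'', hj]) hne
            · rfl
          simpa [Function.onFun, h'', h'] using hd.symm)
      (by
        intro x
        by_cases hx : x ∈ s₁
        · refine ⟨s₂ᶜ, (hc₂.isOpen_compl).mem_nhds (disjoint_left.1 hd hx), ?_⟩
          intro i hi j hj
          have : ∀ k : ULift Bool, ((if k.down then s₁ else s₂) ∩ s₂ᶜ).Nonempty → k.down = true := by
            intro k hk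
            rcases hk with ⟨y, hy1, hy2⟩
            by_contra hkf
            have hk2 : k.down = false := by simpa using hkf
            rw [hk2] at hy1
            simp at hy1
            exact hy2 hy1
          have hi' := this i hi
          have hj' := this j hj
          cases i; cases j; simp_all
        · refine ⟨s₁ᶜ, (hc₁.isOpen_compl).mem_nhds hx, ?_⟩
          intro i hi j hj
          have : ∀ k : ULift Bool, ((if k.down then s₁ else s₂) ∩ s₁ᶜ).Nonempty → k.down = false := by
            intro k hk
            rcases hk with ⟨y, hy1, hy2⟩
            by_contra hkf
            have hk2 : k.down = true := by simpa using hkf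
            rw [hk2] at hy1
            simp at hy1
            exact hy2 hy1
          have hi' := this i hi
          have hj' := this j hj
          cases i; cases j; simp_all)
  refine ⟨W ⟨true⟩, W ⟨false⟩, hWo _, hWo _, by simpa using hWsub ⟨true⟩,
    by simpa using hWsub ⟨false⟩, ?_⟩
  exact hWd (by simp : (⟨true⟩ : ULift Bool) ≠ ⟨false⟩)

theorem exists_zero_fn {X : Type u} [TopologicalSpace X] [NormalSpace X] {F : Set X}
    (hF : IsClosed F) (hG : IsGδ F) :
    ∃ z : X → ℝ, Continuous z ∧ (∀ x, 0 ≤ z x) ∧ ∀ x, z x = 0 ↔ x ∈ F := by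
  obtain ⟨U, hUo, hFeq⟩ := hG.eq_iInter_nat
  have hsub : ∀ n, F ⊆ U n := by
    intro n x hx
    rw [hFeq] at hx
    exact mem_iInter.1 hx n
  have hur : ∀ n : ℕ, ∃ g : C(X, ℝ), EqOn g 0 F ∧ EqOn g 1 (U n)ᶜ ∧
      ∀ x, g x ∈ Icc (0:ℝ) 1 := by
    intro n
    exact exists_continuous_zero_one_of_isClosed hF (hUo n).isClosed_compl
      (disjoint_left.2 fun x hx hx2 => hx2 (hsub n hx))
  choose g hg0 hg1 hgm using hur
  have hbd : ∀ n x, ‖(1/2:ℝ)^(n+1) * g n x‖ ≤ (1/2:ℝ)^(n+1) := by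
    intro n x
    rw [norm_mul, norm_pow]
    simp only [norm_div, norm_one, Real.norm_ofNat]
    calc ((1:ℝ)/2)^(n+1) * ‖g n x‖ ≤ ((1:ℝ)/2)^(n+1) * 1 := by
          apply mul_le_mul_of_nonneg_left _ (by positivity)
          rw [Real.norm_eq_abs, abs_le]
          exact ⟨by linarith [(hgm n x).1], (hgm n x).2⟩
      _ = ((1:ℝ)/2)^(n+1) := mul_one _
  have hu : Summable fun n : ℕ => (1/2:ℝ)^(n+1) := by
    have := summable_geometric_two.mul_right (1/2 : ℝ)
    refine this.congr fun n => ?_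
    rw [pow_succ]
  refine ⟨fun x => ∑' n, (1/2:ℝ)^(n+1) * g n x, ?_, ?_, ?_⟩
  · exact continuous_tsum (fun n => continuous_const.mul (g n).continuous) hu hbd
  · intro x
    apply tsum_nonneg
    intro n
    have := (hgm n x).1
    positivity
  · intro x
    have hsx : Summable fun n : ℕ => (1/2:ℝ)^(n+1) * g n x :=
      Summable.of_norm_bounded hu (hbd · x)
    constructor
    · intro h0
      rw [hFeq]
      rw [mem_iInter]
      intro n
      by_contra hxU
      have h1 : g n x = 1 := hg1 n (by simpa using hxU)
      have hterm : (1/2:ℝ)^(n+1) * g n x ≤ 0 := by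
        rw [← h0]
        apply Summable.le_tsum hsx n
        intro m _
        have := (hgm m x).1
        positivity
      rw [h1, mul_one] at hterm
      have : (0:ℝ) < (1/2:ℝ)^(n+1) := by positivity
      linarith
    · intro hxF
      have : ∀ n : ℕ, (1/2:ℝ)^(n+1) * g n x = 0 := by
        intro n
        rw [hg0 n hxF]
        simp
      show (∑' (n : ℕ), (1/2:ℝ)^(n+1) * g n x) = 0
      rw [tsum_congr this]
      exact tsum_zero

theorem aux_metrizable {X : Type u} {E : Type v} [te : TopologicalSpace E]
    [hE : TopologicalSpace.MetrizableSpace E] (s : TopologicalSpace X)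
    (hs : @TopologicalSpace.MetrizableSpace X s) (Θ : X → E) :
    @TopologicalSpace.MetrizableSpace X (s ⊓ TopologicalSpace.induced Θ te) := by
  have h1 : s ⊓ TopologicalSpace.induced Θ te
      = TopologicalSpace.induced (fun x : X => ((x : X), Θ x))
        (@instTopologicalSpaceProd X E s te) := by
    show s ⊓ TopologicalSpace.induced Θ te
      = TopologicalSpace.induced (fun x : X => ((x : X), Θ x))
        (TopologicalSpace.induced Prod.fst s ⊓ TopologicalSpace.induced Prod.snd te)
    rw [induced_inf, induced_compose, induced_compose]
    have : (Prod.fst ∘ fun x : X => ((x : X), Θ x)) = id := rfl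
    rw [this, induced_id]
    rfl
  have hind : @Topology.IsInducing X (X × E) (s ⊓ TopologicalSpace.induced Θ te)
      (@instTopologicalSpaceProd X E s te) (fun x => (x, Θ x)) :=
    @Topology.IsInducing.mk X (X × E) (s ⊓ TopologicalSpace.induced Θ te)
      (@instTopologicalSpaceProd X E s te) _ h1
  have hemb : @Topology.IsEmbedding X (X × E) (s ⊓ TopologicalSpace.induced Θ te)
      (@instTopologicalSpaceProd X E s te) (fun x => (x, Θ x)) :=
    @Topology.IsEmbedding.mk X (X × E) (s ⊓ TopologicalSpace.induced Θ te)
      (@instTopologicalSpaceProd X E s te) _ hind (fun a b hab => congrArg Prod.fst hab)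
  exact @Topology.IsEmbedding.metrizableSpace X (X × E) (s ⊓ TopologicalSpace.induced Θ te)
    (@instTopologicalSpaceProd X E s te)
    (@TopologicalSpace.metrizableSpace_prod X E s te hs hE) _ hemb

theorem isOpen_iUnion' {X : Type u} {ι : Sort v} (τ : TopologicalSpace X) {f : ι → Set X}
    (hf : ∀ i, τ.IsOpen (f i)) : τ.IsOpen (⋃ i, f i) := by
  letI := τ
  exact isOpen_iUnion hf

theorem isClosed_of_isOpen_compl' {X : Type u} (τ : TopologicalSpace X) {s : Set X}
    (hs : τ.IsOpen sᶜ) : @IsClosed X τ s := by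
  letI := τ
  exact ⟨hs⟩

theorem mem_nhds' {X : Type u} (τ : TopologicalSpace X) {U : Set X} {x : X}
    (hU : τ.IsOpen U) (hx : x ∈ U) : U ∈ @nhds X τ x := by
  letI := τ
  exact IsOpen.mem_nhds hU hx

theorem stmt1 {X : Type u} [t : TopologicalSpace X]
    (hcwn : CollectionwiseNormal X) (hsub : Submetrizable t)
    (𝓕 : Set (Set X)) (hlf : LocallyFiniteFamily t 𝓕)
    (hcl : ∀ C ∈ 𝓕, IsClosed C)
    (hGδ : ∀ 𝓕' ⊆ 𝓕, IsGδ (⋃₀ 𝓕')) :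
    ∃ σ : TopologicalSpace X, (∀ U, σ.IsOpen U → t.IsOpen U) ∧
      @TopologicalSpace.MetrizableSpace X σ ∧
      (∀ C ∈ 𝓕, @IsClosed X σ C) ∧ LocallyFiniteFamily σ 𝓕 := by
  classical
  haveI hnorm : NormalSpace X := cwn_normal hcwn
  -- the (finite) pattern of a point
  have hpat : ∀ x : X, {C | C ∈ 𝓕 ∧ x ∈ C}.Finite := by
    intro x
    obtain ⟨U, hU, hfin⟩ := hlf x
    exact hfin.subset (fun C hC => ⟨hC.1, ⟨x, hC.2, mem_of_mem_nhds hU⟩⟩)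
  -- unions of subfamilies are closed
  have hclosedU : ∀ A : Set (Set X), A ⊆ 𝓕 → IsClosed (⋃₀ A) := by
    intro A hA
    rw [sUnion_eq_iUnion]
    apply LocallyFinite.isClosed_iUnion
    · intro x
      obtain ⟨U, hU, hfin⟩ := hlf x
      refine ⟨U, hU, ?_⟩
      have hsub2 : {i : A | ((i : Set X) ∩ U).Nonempty}
          ⊆ Subtype.val ⁻¹' {C | C ∈ 𝓕 ∧ (C ∩ U).Nonempty} := fun i hi => ⟨hA i.2, hi⟩
      exact ((hfin.preimage (Subtype.val_injective.injOn)).subset hsub2)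
    · exact fun i => hcl i (hA i.2)
  -- zero-set functions for unions of cofamilies
  have hzex : ∀ A : Set (Set X), ∃ z : X → ℝ, Continuous z ∧ (∀ x, 0 ≤ z x) ∧
      ∀ x, z x = 0 ↔ x ∈ ⋃₀ (𝓕 \ A) :=
    fun A => exists_zero_fn (hclosedU _ diff_subset) (hGδ _ diff_subset)
  choose z hzc hznn hz0 using hzex
  -- the discrete families
  set Q : ℕ → {A : Set (Set X) // A ⊆ 𝓕} → Set X :=
    fun k A => ⋂₀ A.1 ∩ {x | ((k : ℝ) + 1)⁻¹ ≤ z A.1 x} with hQdef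
  have hcpos : ∀ k : ℕ, (0:ℝ) < ((k : ℝ) + 1)⁻¹ := by
    intro k; positivity
  have hQpat : ∀ (k : ℕ) (A : {A : Set (Set X) // A ⊆ 𝓕}) (x : X), x ∈ Q k A →
      ∀ C, C ∈ A.1 ↔ C ∈ 𝓕 ∧ x ∈ C := by
    intro k A x hx C
    constructor
    · intro hCA
      exact ⟨A.2 hCA, hx.1 C hCA⟩
    · rintro ⟨hCF, hxC⟩
      by_contra hCA
      have hmem : x ∈ ⋃₀ (𝓕 \ A.1) := ⟨C, ⟨hCF, hCA⟩, hxC⟩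
      have hz0' := (hz0 A.1 x).2 hmem
      have hxq : ((k : ℝ) + 1)⁻¹ ≤ z A.1 x := hx.2
      rw [hz0'] at hxq
      exact absurd hxq (not_le.2 (hcpos k))
  have hQclosed : ∀ k A, IsClosed (Q k A) := by
    intro k A
    apply IsClosed.inter
    · exact isClosed_sInter (fun C hC => hcl C (A.2 hC))
    · exact IsClosed.preimage (hzc A.1) isClosed_Ici
  have hQdisj : ∀ k, Pairwise (Function.onFun Disjoint (Q k)) := by
    intro k i j hij
    rw [Function.onFun, Set.disjoint_left]
    intro y hyi hyj
    apply hij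
    apply Subtype.ext
    ext C
    rw [hQpat k i y hyi C, ← hQpat k j y hyj C]
  have hQdisc : ∀ k, DiscreteFamily t (Q k) := by
    intro k x
    set P := {C | C ∈ 𝓕 ∧ x ∈ C} with hP
    have hV₁o : IsOpen (⋃₀ {C | C ∈ 𝓕 ∧ x ∉ C})ᶜ :=
      (hclosedU _ (fun C hC => hC.1)).isOpen_compl
    have hPxfin : {B | B ⊆ P ∧ B ≠ P}.Finite :=
      ((hpat x).finite_subsets).subset (fun B hB => hB.1)
    have hV₂o : IsOpen (⋂ B ∈ {B | B ⊆ P ∧ B ≠ P}, {y | z B y < ((k : ℝ) + 1)⁻¹}) := by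
      apply hPxfin.isOpen_biInter
      intro B _
      exact isOpen_lt (hzc B) continuous_const
    refine ⟨(⋃₀ {C | C ∈ 𝓕 ∧ x ∉ C})ᶜ ∩ ⋂ B ∈ {B | B ⊆ P ∧ B ≠ P}, {y | z B y < ((k : ℝ) + 1)⁻¹},
      ?_, ?_⟩
    · apply IsOpen.mem_nhds (hV₁o.inter hV₂o)
      constructor
      · intro hx
        obtain ⟨C, ⟨hCF, hxC⟩, hxC'⟩ := hx
        exact hxC hxC'
      · rw [mem_iInter₂]
        rintro B ⟨hBP, hBne⟩
        obtain ⟨C, hCP, hCB⟩ := exists_of_ssubset (ssubset_iff_subset_ne.2 ⟨hBP, hBne⟩)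
        have hmem : x ∈ ⋃₀ (𝓕 \ B) := ⟨C, ⟨hCP.1, hCB⟩, hCP.2⟩
        have hz0' := (hz0 B x).2 hmem
        simp only [mem_setOf_eq, hz0']
        exact hcpos k
    · intro i hi j hj
      have key : ∀ m : {A : Set (Set X) // A ⊆ 𝓕},
          (Q k m ∩ ((⋃₀ {C | C ∈ 𝓕 ∧ x ∉ C})ᶜ ∩
            ⋂ B ∈ {B | B ⊆ P ∧ B ≠ P}, {y | z B y < ((k : ℝ) + 1)⁻¹})).Nonempty →
          m.1 = P := by
        rintro m ⟨y, hyQ, hyV₁, hyV₂⟩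
        have hmP : m.1 ⊆ P := by
          intro C hCm
          have hCF : C ∈ 𝓕 := m.2 hCm
          have hyC : y ∈ C := hyQ.1 C hCm
          by_contra hxC
          have hxC' : x ∉ C := fun hxx => hxC ⟨hCF, hxx⟩
          exact hyV₁ ⟨C, ⟨hCF, hxC'⟩, hyC⟩
        by_contra hne
        have hmem : m.1 ∈ {B | B ⊆ P ∧ B ≠ P} := ⟨hmP, hne⟩
        have hlt := mem_iInter₂.1 hyV₂ m.1 hmem
        simp only [mem_setOf_eq] at hlt
        have hge : ((k : ℝ) + 1)⁻¹ ≤ z m.1 y := hyQ.2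
        linarith
      apply Subtype.ext
      rw [key i hi, key j hj]
  -- collectionwise normality: open discrete expansions
  have hWex : ∀ k : ℕ, ∃ W : {A : Set (Set X) // A ⊆ 𝓕} → Set X,
      (∀ i, IsOpen (W i)) ∧ Pairwise (Function.onFun Disjoint W) ∧
      DiscreteFamily t W ∧ ∀ i, Q k i ⊆ W i :=
    fun k => hcwn.2 _ (Q k) (hQclosed k) (hQdisj k) (hQdisc k)
  choose W hWo hWd hWdisc hQW using hWex
  -- shrink: O
  set O : ℕ → {A : Set (Set X) // A ⊆ 𝓕} → Set X :=
    fun k A => W k A ∩ {y | 0 < z A.1 y} with hOdef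
  have hOopen : ∀ k A, IsOpen (O k A) :=
    fun k A => (hWo k A).inter (isOpen_lt continuous_const (hzc A.1))
  have hQO : ∀ k A, Q k A ⊆ O k A := by
    intro k A y hy
    exact ⟨hQW k A hy, lt_of_lt_of_le (hcpos k) hy.2⟩
  have hOW : ∀ k A, O k A ⊆ W k A := fun k A y hy => hy.1
  have hOavoid : ∀ k A C, C ∈ 𝓕 → C ∉ A.1 → ∀ y ∈ O k A, y ∉ C := by
    intro k A C hCF hCA y hyO hyC
    have hmem : y ∈ ⋃₀ (𝓕 \ A.1) := ⟨C, ⟨hCF, hCA⟩, hyC⟩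
    have hz0' := (hz0 A.1 y).2 hmem
    have h2 : (0:ℝ) < z A.1 y := hyO.2
    rw [hz0'] at h2
    exact lt_irrefl 0 h2
  -- Urysohn functions
  have hhex : ∀ (k : ℕ) (A : {A : Set (Set X) // A ⊆ 𝓕}), ∃ f : C(X, ℝ),
      EqOn f 0 (O k A)ᶜ ∧ EqOn f 1 (Q k A) ∧ ∀ x, f x ∈ Icc (0:ℝ) 1 :=
    fun k A => exists_continuous_zero_one_of_isClosed (hOopen k A).isClosed_compl
      (hQclosed k A) (disjoint_left.2 fun y hyc hyQ => hyc (hQO k A hyQ))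
  choose h h0 h1 hm using hhex
  -- off the W's the functions vanish
  have hvanish : ∀ (k : ℕ) A (y : X), y ∉ W k A → h k A y = 0 := by
    intro k A y hy
    exact h0 k A (fun hyO => hy (hOW k A hyO))
  -- bundle into a single bounded map
  letI tι : TopologicalSpace {A : Set (Set X) // A ⊆ 𝓕} := ⊥
  haveI : DiscreteTopology {A : Set (Set X) // A ⊆ 𝓕} := ⟨rfl⟩
  have hmem01 : ∀ (x : X) (p : ℕ × {A : Set (Set X) // A ⊆ 𝓕}),
      (1/2:ℝ)^p.1 * h p.1 p.2 x ∈ Icc (0:ℝ) 1 := by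
    intro x p
    constructor
    · exact mul_nonneg (by positivity) (hm p.1 p.2 x).1
    · exact mul_le_one₀ (pow_le_one₀ (by norm_num) (by norm_num)) (hm p.1 p.2 x).1
        (hm p.1 p.2 x).2
  have hΦbd : ∀ (x : X) (p q : ℕ × {A : Set (Set X) // A ⊆ 𝓕}),
      dist ((1/2:ℝ)^p.1 * h p.1 p.2 x) ((1/2:ℝ)^q.1 * h q.1 q.2 x) ≤ 1 := by
    intro x p q
    rw [Real.dist_eq, abs_le]
    constructor <;> nlinarith [hmem01 x p, (hmem01 x p).1, (hmem01 x p).2,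
      (hmem01 x q).1, (hmem01 x q).2]
  set Φ : X → BoundedContinuousFunction (ℕ × {A : Set (Set X) // A ⊆ 𝓕}) ℝ :=
    fun x => ⟨⟨fun p => (1/2:ℝ)^p.1 * h p.1 p.2 x, continuous_of_discreteTopology⟩,
      ⟨1, hΦbd x⟩⟩ with hΦdef
  have hΦapp : ∀ (y : X) (p : ℕ × {A : Set (Set X) // A ⊆ 𝓕}),
      Φ y p = (1/2:ℝ)^p.1 * h p.1 p.2 y := fun _ _ => rfl
  -- continuity of Φ with respect to t
  have keyCont : ∀ (k : ℕ) (x : X) (ε : ℝ), 0 < ε →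
      ∃ V ∈ @nhds X t x, ∀ y ∈ V, ∀ A, |h k A y - h k A x| ≤ ε := by
    intro k x ε hε
    obtain ⟨U₀, hU₀, hsub0⟩ := hWdisc k x
    have hxU₀ : x ∈ U₀ := mem_of_mem_nhds hU₀
    by_cases hex : ∃ A, (W k A ∩ U₀).Nonempty
    · obtain ⟨A₀, hA₀⟩ := hex
      have hco : Continuous fun y => |h k A₀ y - h k A₀ x| :=
        (continuous_abs.comp ((h k A₀).continuous.sub continuous_const))
      refine ⟨U₀ ∩ {y | |h k A₀ y - h k A₀ x| < ε}, Filter.inter_mem hU₀ ?_, ?_⟩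
      · apply IsOpen.mem_nhds (isOpen_lt hco continuous_const)
        simp [hε]
      · rintro y ⟨hyU₀, hylt⟩ A
        by_cases hAA : A = A₀
        · subst hAA
          exact le_of_lt hylt
        · have hAW : ¬ (W k A ∩ U₀).Nonempty := by
            intro hne
            exact hAA (hsub0 hne hA₀)
          have hy0 : h k A y = 0 := hvanish k A y (fun hyW => hAW ⟨y, hyW, hyU₀⟩)
          have hx0 : h k A x = 0 := hvanish k A x (fun hxW => hAW ⟨x, hxW, hxU₀⟩)
          rw [hy0, hx0]
          simpa using le_of_lt hε
    · refine ⟨U₀, hU₀, ?_⟩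
      intro y hy A
      have hAW : ¬ (W k A ∩ U₀).Nonempty := fun hne => hex ⟨A, hne⟩
      have hy0 : h k A y = 0 := hvanish k A y (fun hyW => hAW ⟨y, hyW, hy⟩)
      have hx0 : h k A x = 0 := hvanish k A x (fun hxW => hAW ⟨x, hxW, hxU₀⟩)
      rw [hy0, hx0]
      simpa using le_of_lt hε
  have hΦcont : Continuous Φ := by
    rw [continuous_iff_continuousAt]
    intro x
    rw [ContinuousAt, Metric.tendsto_nhds]
    intro ε hε
    obtain ⟨K, hK⟩ := exists_pow_lt_of_lt_one (half_pos hε) (by norm_num : (1/2:ℝ) < 1)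
    -- neighborhoods for each k ≤ K
    have hVs : ∀ k : ℕ, ∃ V ∈ @nhds X t x, ∀ y ∈ V, ∀ A, |h k A y - h k A x| ≤ ε/2 :=
      fun k => keyCont k x (ε/2) (half_pos hε)
    choose V hV hVp using hVs
    have hbig : (⋂ k ∈ Finset.range (K+1), V k) ∈ @nhds X t x := by
      exact (Filter.biInter_finset_mem (Finset.range (K+1))).2 (fun k _ => hV k)
    apply Filter.eventually_of_mem hbig
    intro y hy
    have hyV : ∀ k ≤ K, y ∈ V k := by
      intro k hk
      exact mem_iInter₂.1 hy k (Finset.mem_range.2 (Nat.lt_succ_of_le hk))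
    have hdle : dist (Φ y) (Φ x) ≤ ε/2 := by
      rw [BoundedContinuousFunction.dist_le (le_of_lt (half_pos hε))]
      intro p
      rw [hΦapp, hΦapp, Real.dist_eq, ← mul_sub, abs_mul, abs_pow]
      have habs2 : |(1:ℝ)/2| = 1/2 := by norm_num
      rw [habs2]
      rcases le_or_gt p.1 K with hpK | hpK
      · calc ((1:ℝ)/2)^p.1 * |h p.1 p.2 y - h p.1 p.2 x|
            ≤ 1 * (ε/2) := by
              apply mul_le_mul (pow_le_one₀ (by norm_num) (by norm_num))
                (hVp p.1 y (hyV p.1 hpK) p.2) (abs_nonneg _) (by norm_num)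
          _ = ε/2 := one_mul _
      · calc ((1:ℝ)/2)^p.1 * |h p.1 p.2 y - h p.1 p.2 x|
            ≤ ((1:ℝ)/2)^p.1 * 1 := by
              apply mul_le_mul_of_nonneg_left _ (by positivity)
              have hy01 := hm p.1 p.2 y
              have hx01 := hm p.1 p.2 x
              rw [abs_le]
              constructor <;> [linarith [hy01.1, hx01.2]; linarith [hy01.2, hx01.1]]
          _ = ((1:ℝ)/2)^p.1 := mul_one _
          _ ≤ ((1:ℝ)/2)^K := pow_le_pow_of_le_one (by norm_num) (by norm_num)
              (le_of_lt hpK)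
          _ ≤ ε/2 := le_of_lt hK
    linarith [hdle]
  -- the key per-point neighborhood
  have hkey : ∀ x : X, ∃ N : Set X,
      (TopologicalSpace.induced Φ (inferInstance :
        TopologicalSpace (BoundedContinuousFunction (ℕ × {A : Set (Set X) // A ⊆ 𝓕}) ℝ))).IsOpen N
      ∧ x ∈ N ∧ ∀ C ∈ 𝓕, (C ∩ N).Nonempty → x ∈ C := by
    intro x
    set Ax : {A : Set (Set X) // A ⊆ 𝓕} := ⟨{C | C ∈ 𝓕 ∧ x ∈ C}, fun C hC => hC.1⟩ with hAx
    have hznz : z Ax.1 x ≠ 0 := by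
      intro hzz
      obtain ⟨C, ⟨hCF, hCA⟩, hxC⟩ := (hz0 Ax.1 x).1 hzz
      exact hCA ⟨hCF, hxC⟩
    have hzpos : 0 < z Ax.1 x := lt_of_le_of_ne (hznn Ax.1 x) (Ne.symm hznz)
    obtain ⟨k, hk⟩ := exists_nat_one_div_lt hzpos
    have hxQ : x ∈ Q k Ax := by
      constructor
      · intro C hC
        exact hC.2
      · show ((k:ℝ)+1)⁻¹ ≤ z Ax.1 x
        rw [← one_div]
        exact le_of_lt hk
    have hval : h k Ax x = 1 := h1 k Ax hxQ
    have hhalfpos : (0:ℝ) < (1/2:ℝ)^k := by positivity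
    refine ⟨Φ ⁻¹' {g | (1/2:ℝ)^k * (1/2) < g (k, Ax)}, ?_, ?_, ?_⟩
    · exact isOpen_induced_iff.2 ⟨_,
        isOpen_lt continuous_const (BoundedContinuousFunction.lipschitz_eval_const _).continuous, rfl⟩
    · show (1/2:ℝ)^k * (1/2) < Φ x (k, Ax)
      rw [hΦapp, hval, mul_one]
      exact mul_lt_of_lt_one_right hhalfpos (by norm_num)
    · rintro C hCF ⟨y, hyC, hyN⟩
      have hΦy : (1/2:ℝ)^k * (1/2) < Φ y (k, Ax) := hyN
      rw [hΦapp] at hΦy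
      have hyO : y ∈ O k Ax := by
        by_contra hyO
        have hzero := h0 k Ax hyO
        simp only [Pi.zero_apply] at hzero
        rw [hzero, mul_zero] at hΦy
        nlinarith
      by_contra hxC
      exact hOavoid k Ax C hCF (fun hmem => hxC hmem.2) y hyO hyC
  choose N hNo hNx hNp using hkey
  -- now obtain the metrizable coarser topology and build σ
  obtain ⟨s, hst, hsmet⟩ := hsub
  refine ⟨s ⊓ TopologicalSpace.induced Φ inferInstance, ?_, ?_, ?_, ?_⟩
  · intro U hU
    have hts : t ≤ s ⊓ TopologicalSpace.induced Φ inferInstance :=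
      le_inf (isOpen_implies_isOpen_iff.1 hst) (continuous_iff_le_induced.1 hΦcont)
    exact isOpen_implies_isOpen_iff.2 hts U hU
  · exact aux_metrizable s hsmet Φ
  · intro C hCF
    have hNo' : ∀ y : X, (s ⊓ TopologicalSpace.induced Φ inferInstance).IsOpen (N y) :=
      fun y => isOpen_implies_isOpen_iff.2 inf_le_right (N y) (hNo y)
    apply isClosed_of_isOpen_compl'
    have hCc : Cᶜ = ⋃ (y : {y : X // y ∈ Cᶜ}), N y.1 := by
      ext w
      constructor
      · intro hw
        exact mem_iUnion.2 ⟨⟨w, hw⟩, hNx w⟩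
      · intro hw
        obtain ⟨⟨y, hy⟩, hwN⟩ := mem_iUnion.1 hw
        intro hwC
        exact hy (hNp y C hCF ⟨w, hwC, hwN⟩)
    rw [hCc]
    exact isOpen_iUnion' _ (fun y => hNo' y.1)
  · intro x
    have hNo' : (s ⊓ TopologicalSpace.induced Φ inferInstance).IsOpen (N x) :=
      isOpen_implies_isOpen_iff.2 inf_le_right (N x) (hNo x)
    refine ⟨N x, mem_nhds' _ hNo' (hNx x), ?_⟩
    exact (hpat x).subset (fun C hC => ⟨hC.1, hNp x C hC.1 hC.2⟩)
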